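/- Let $n\ge 2$ be an integer and let $c_u$ for $0\le u\le n^2-1$ denote the aperiodic autocorrelations of the coefficient sequence of $h_n$. Then for every integer $v$ with $0 < v < n/2$, $\sum_{u=0}^{n-1} |c_{nu+v}|^2 = 2n\sum_{k=1}^{v}\left(\frac{\sin(\pi k/n)}{\sin(\pi v/n)}\right)^2 - n$. -/

import Mathlib

/-- The coefficients of `h_n`: `b_{nj+k} = ζ^{jk}` with `ζ = e^{2πi/n}`, for `0 ≤ j,k < n`;
here `j = m / n` and `k = m % n` for an index `m = nj + k`. -/
noncomputable def hCoef (n : ℕ) (m : ℕ) : ℂ :=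
  Complex.exp (2 * Real.pi * Complex.I / n) ^ ((m / n) * (m % n))

/-- The aperiodic autocorrelations `c_u = ∑_{0 ≤ m, m+u < n²} b_m conj(b_{m+u})` of the
coefficient sequence of `h_n`. -/
noncomputable def hCorr (n : ℕ) (u : ℕ) : ℂ :=
  ∑ m ∈ Finset.range (n ^ 2 - u), hCoef n m * (starRingEnd ℂ) (hCoef n (m + u))


open Finset Complex

namespace HC

noncomputable def ze (n : ℕ) (a : ℤ) : ℂ := Complex.exp (2 * Real.pi * Complex.I / n) ^ a

lemma ze_add (n : ℕ) (a b : ℤ) : ze n (a + b) = ze n a * ze n b :=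
  zpow_add₀ (Complex.exp_ne_zero _) a b

lemma ze_zero (n : ℕ) : ze n 0 = 1 := zpow_zero _

lemma ze_eq_one_iff {n : ℕ} (hn : n ≠ 0) (a : ℤ) : ze n a = 1 ↔ (n : ℤ) ∣ a :=
  (Complex.isPrimitiveRoot_exp n hn).zpow_eq_one_iff_dvd a

lemma ze_n_mul {n : ℕ} (hn : n ≠ 0) (a : ℤ) : ze n ((n : ℤ) * a) = 1 :=
  (ze_eq_one_iff hn _).mpr ⟨a, rfl⟩

lemma ze_conj (n : ℕ) (a : ℤ) : (starRingEnd ℂ) (ze n a) = ze n (-a) := by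
  rw [ze, map_zpow₀]
  have h : (starRingEnd ℂ) (Complex.exp (2 * Real.pi * Complex.I / n)) =
      (Complex.exp (2 * Real.pi * Complex.I / n))⁻¹ := by
    rw [← Complex.exp_conj, ← Complex.exp_neg]
    congr 1
    simp only [map_div₀, map_mul, Complex.conj_I, Complex.conj_ofReal, map_ofNat,
      Complex.conj_natCast]
    ring
  rw [h, inv_zpow, ← zpow_neg, ze]

lemma ze_mul_natCast (n : ℕ) (w : ℤ) (s : ℕ) : ze n (w * s) = (ze n w) ^ s := by
  rw [ze, zpow_mul, zpow_natCast, ze]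

lemma orth {n : ℕ} (hn : n ≠ 0) (w : ℤ) :
    ∑ u ∈ range n, ze n (u * w) = if (n : ℤ) ∣ w then (n : ℂ) else 0 := by
  have hrw : ∀ u ∈ range n, ze n (u * w) = (ze n w) ^ u := by
    intro u _; rw [mul_comm, ze_mul_natCast]
  rw [Finset.sum_congr rfl hrw]
  split_ifs with h
  · have : ze n w = 1 := (ze_eq_one_iff hn w).mpr h
    simp [this]
  · have h1 : ze n w ≠ 1 := fun hh => h ((ze_eq_one_iff hn w).mp hh)
    rw [geom_sum_eq h1]
    have h2 : (ze n w) ^ n = 1 := by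
      rw [← ze_mul_natCast, mul_comm, ze_n_mul hn]
    simp [h2]

lemma sum_range_mul_add {M : Type*} [AddCommMonoid M] (n : ℕ) (f : ℕ → M) (q r : ℕ) :
    ∑ m ∈ range (n * q + r), f m
      = (∑ j ∈ range q, ∑ k ∈ range n, f (n * j + k)) + ∑ k ∈ range r, f (n * q + k) := by
  induction q generalizing r with
  | zero => simp
  | succ q ih =>
    have h1 : n * (q + 1) + r = n * q + (n + r) := by ring
    rw [h1, ih (n + r), Finset.sum_range_add (fun k => f (n * q + k)) n r,
      Finset.sum_range_succ, add_assoc]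
    congr 2
    refine Finset.sum_congr rfl fun k _ => congrArg f (by ring)

lemma not_dvd_small {n : ℕ} (w : ℤ) (h1 : 0 < w) (h2 : w < n) : ¬ (n : ℤ) ∣ w := fun h =>
  absurd (Int.le_of_dvd h1 h) (by omega)

lemma dvd_iff_eq {n : ℕ} (s t : ℕ) (hs : (s:ℤ) < n) (ht : (t:ℤ) < n) :
    ((n : ℤ) ∣ ((s:ℤ) - t)) ↔ s = t := by
  constructor
  · intro h
    rcases h with ⟨c, hc⟩
    have : c = 0 := by
      have hn0 : (0:ℤ) < n := by omega
      rcases lt_trichotomy c 0 with h'|h'|h'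
      · nlinarith [Int.natCast_nonneg s, Int.natCast_nonneg t]
      · exact h'
      · nlinarith [Int.natCast_nonneg s, Int.natCast_nonneg t]
    rw [this, mul_zero] at hc
    omega
  · rintro rfl; simp


/-- `R_w = ∑_{t<v} ζ^{-wt}` -/
noncomputable def Rf (n v w : ℕ) : ℂ := ∑ t ∈ range v, ze n (-((w : ℤ) * t))

/-- scaled `F̃(w) = (1 - ζ^{wv}) R_w` -/
noncomputable def Ft (n v w : ℕ) : ℂ := (1 - ze n ((w : ℤ) * v)) * Rf n v w

lemma hCoef_eval {n : ℕ} (hn : n ≠ 0) (j k : ℕ) (hk : k < n) :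
    hCoef n (n * j + k) = ze n ((j : ℤ) * k) := by
  rw [hCoef, Nat.mul_add_div (Nat.pos_of_ne_zero hn), Nat.mul_add_mod,
    Nat.div_eq_of_lt hk, Nat.mod_eq_of_lt hk, add_zero, ze, ← zpow_natCast]
  norm_cast

lemma term_nocarry {n : ℕ} (hn : n ≠ 0) (u v j k : ℕ) (hkv : k + v < n) :
    hCoef n (n * j + k) * (starRingEnd ℂ) (hCoef n (n * j + k + (n * u + v)))
      = ze n (-((j : ℤ) * v)) * ze n (-((u : ℤ) * (k + v))) := by
  have h1 : n * j + k + (n * u + v) = n * (j + u) + (k + v) := by ring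
  rw [h1, hCoef_eval hn _ _ (by omega), hCoef_eval hn _ _ hkv, ze_conj, ← ze_add, ← ze_add]
  congr 1
  push_cast; ring

lemma term_carry {n : ℕ} (hn : n ≠ 0) (u v j t : ℕ) (hv : v ≤ n) (ht : t < v) :
    hCoef n (n * j + ((n - v) + t)) * (starRingEnd ℂ)
        (hCoef n (n * j + ((n - v) + t) + (n * u + v)))
      = ze n (-((j : ℤ) * v)) * ze n (-(((u : ℤ) + 1) * t)) := by
  set b := n - v with hbdef
  have hb : b + v = n := by omega
  have h1 : n * j + (b + t) + (n * u + v) = n * (j + u + 1) + t := by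
    calc n * j + (b + t) + (n * u + v) = n * j + n * u + (b + v) + t := by ring
    _ = n * j + n * u + n + t := by rw [hb]
    _ = n * (j + u + 1) + t := by ring
  rw [h1, hCoef_eval hn _ _ (by omega), hCoef_eval hn _ _ (by omega), ze_conj, ← ze_add]
  have hbz : (b : ℤ) = (n : ℤ) - v := by omega
  rw [show ((j:ℤ) * ((b:ℕ) + t : ℕ) + -(((j:ℕ) + u + 1 : ℕ) * (t:ℤ)) : ℤ)
      = (n : ℤ) * j + (-((j : ℤ) * v) + -(((u : ℤ) + 1) * t)) from by
    push_cast
    linear_combination (j : ℤ) * hbz]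
  rw [ze_add, ze_n_mul hn, one_mul, ze_add]

lemma key1 {n v : ℕ} (hn : n ≠ 0) (hv1 : 0 < v) (hvn : v < n) (u : ℕ) (hu : u < n) :
    (1 - ze n (-(v : ℤ))) * hCorr n (n * u + v) = Ft n v (u + 1) - Ft n v u := by
  set a := n - (u + 1) with hadef
  set b := n - v with hbdef
  have hsz : n ^ 2 - (n * u + v) = n * a + b := by
    refine Nat.sub_eq_of_eq_add ?_
    have h1 : n = u + 1 + a := by omega
    have h2 : n = v + b := by omega
    calc n ^ 2 = n * n := by ring
    _ = n * (u + 1 + a) := by rw [← h1]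
    _ = n * a + n * u + n := by ring
    _ = n * a + n * u + (v + b) := by rw [← h2]
    _ = n * a + b + (n * u + v) := by ring
  rw [hCorr, hsz, sum_range_mul_add]
  -- P = ∑_{k<b} ζ^{-u(k+v)}
  set P : ℂ := ∑ k ∈ range b, ze n (-((u : ℤ) * (k + v))) with hP
  have inner : ∀ j : ℕ, ∑ k ∈ range n,
      hCoef n (n * j + k) * (starRingEnd ℂ) (hCoef n (n * j + k + (n * u + v)))
      = ze n (-((j : ℤ) * v)) * (P + Rf n v (u + 1)) := by
    intro j
    have hsplit := Finset.sum_range_add (fun k => hCoef n (n * j + k) *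
      (starRingEnd ℂ) (hCoef n (n * j + k + (n * u + v)))) b v
    rw [show b + v = n from by omega] at hsplit
    rw [hsplit]
    have e1 : ∀ k ∈ range b,
        hCoef n (n * j + k) * (starRingEnd ℂ) (hCoef n (n * j + k + (n * u + v)))
        = ze n (-((j : ℤ) * v)) * ze n (-((u : ℤ) * (k + v))) := fun k hk =>
      term_nocarry hn u v j k (by simp at hk; omega)
    have e2 : ∀ t ∈ range v,
        hCoef n (n * j + (b + t)) * (starRingEnd ℂ) (hCoef n (n * j + (b + t) + (n * u + v)))
        = ze n (-((j : ℤ) * v)) * ze n (-(((u : ℤ) + 1) * t)) := fun t ht =>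
      term_carry hn u v j t (by omega) (by simpa using ht)
    rw [Finset.sum_congr rfl e1, Finset.sum_congr rfl e2, ← Finset.mul_sum, ← Finset.mul_sum,
      ← mul_add, hP, Rf]
    norm_cast
  rw [Finset.sum_congr rfl fun j _ => inner j]
  have e3 : ∀ k ∈ range b,
      hCoef n (n * a + k) * (starRingEnd ℂ) (hCoef n (n * a + k + (n * u + v)))
      = ze n (-((a : ℤ) * v)) * ze n (-((u : ℤ) * (k + v))) := fun k hk =>
    term_nocarry hn u v a k (by simp at hk; omega)
  rw [Finset.sum_congr rfl e3, ← Finset.mul_sum, ← hP, ← Finset.sum_mul]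
  set Sa : ℂ := ∑ j ∈ range a, ze n (-((j : ℤ) * v)) with hSa
  -- now goal: (1 - ze (-v)) * (Sa * (P + Rf (u+1)) + ze(-(a*v)) * P) = Ft (u+1) - Ft u
  have dS : ∀ N : ℕ, (1 - ze n (-(v : ℤ))) * (∑ j ∈ range N, ze n (-((j : ℤ) * v)))
      = 1 - ze n (-((N : ℤ) * v)) := by
    intro N
    have hx : ∀ j ∈ range N, ze n (-((j : ℤ) * v)) = (ze n (-(v : ℤ))) ^ j := by
      intro j _
      rw [← ze_mul_natCast]
      congr 1; ring
    rw [Finset.sum_congr rfl hx]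
    have := geom_sum_mul (ze n (-(v : ℤ))) N
    have hxN : (ze n (-(v : ℤ))) ^ N = ze n (-((N : ℤ) * v)) := by
      rw [← ze_mul_natCast]; congr 1; ring
    linear_combination -this - hxN
  have hSa1 : (1 - ze n (-(v : ℤ))) * (Sa + ze n (-((a : ℤ) * v)))
      = 1 - ze n ((u : ℤ) * v) := by
    have : Sa + ze n (-((a : ℤ) * v)) = ∑ j ∈ range (a + 1), ze n (-((j : ℤ) * v)) := by
      rw [Finset.sum_range_succ]
    rw [this, dS (a + 1)]
    have haz : ((a : ℤ) + 1) = (n : ℤ) - u := by omega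
    congr 1
    rw [show (-(((a + 1 : ℕ) : ℤ) * v)) = (n : ℤ) * (-v) + (u : ℤ) * v from by
      push_cast; linear_combination (-(v : ℤ)) * haz]
    rw [ze_add, ze_n_mul hn, one_mul]
  have hSa0 : (1 - ze n (-(v : ℤ))) * Sa = 1 - ze n (((u + 1 : ℕ) : ℤ) * v) := by
    rw [hSa, dS a]
    have haz : (a : ℤ) = (n : ℤ) - u - 1 := by omega
    congr 1
    rw [show (-((a : ℤ) * v)) = (n : ℤ) * (-v) + ((u + 1 : ℕ) : ℤ) * v from by
      push_cast; linear_combination (-(v : ℤ)) * haz]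
    rw [ze_add, ze_n_mul hn, one_mul]
  have hG : P + Rf n v u = ∑ s ∈ range n, ze n ((s : ℤ) * (-(u : ℤ))) := by
    have hsplit := Finset.sum_range_add (fun s => ze n ((s : ℤ) * (-(u : ℤ)))) v b
    rw [show v + b = n from by omega] at hsplit
    rw [hsplit, hP, Rf, add_comm]
    congr 1
    · refine Finset.sum_congr rfl fun t _ => ?_
      congr 1; push_cast; ring
    · refine Finset.sum_congr rfl fun k _ => ?_
      congr 1; push_cast; ring
  have hzero : (1 - ze n ((u : ℤ) * v)) * (P + Rf n v u) = 0 := by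
    by_cases hc : (n : ℤ) ∣ (u : ℤ)
    · have h1 : ze n ((u : ℤ) * v) = 1 := (ze_eq_one_iff hn _).mpr (hc.mul_right v)
      rw [h1]; ring
    · have h2 : P + Rf n v u = 0 := by
        rw [hG, orth hn, if_neg]
        intro h; exact hc (by rwa [Int.dvd_neg] at h)
      rw [h2, mul_zero]
  calc (1 - ze n (-(v : ℤ))) * (Sa * (P + Rf n v (u + 1)) + ze n (-((a : ℤ) * v)) * P)
      = ((1 - ze n (-(v : ℤ))) * (Sa + ze n (-((a : ℤ) * v)))) * P
        + ((1 - ze n (-(v : ℤ))) * Sa) * Rf n v (u + 1) := by ring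
    _ = (1 - ze n ((u : ℤ) * v)) * P
        + (1 - ze n (((u + 1 : ℕ) : ℤ) * v)) * Rf n v (u + 1) := by rw [hSa1, hSa0]
    _ = Ft n v (u + 1) - Ft n v u := by rw [Ft, Ft]; linear_combination hzero

lemma conjFt (n v u : ℕ) : (starRingEnd ℂ) (Ft n v u)
    = (1 - ze n (-((u : ℤ) * v))) * ∑ s ∈ range v, ze n ((u : ℤ) * s) := by
  rw [Ft, map_mul, map_sub, map_one, ze_conj, Rf, map_sum]
  congr 1
  refine Finset.sum_congr rfl fun t _ => ?_
  rw [ze_conj, neg_neg]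

lemma hXX (n : ℕ) (a : ℤ) : ze n a * ze n (-a) = 1 := by
  rw [← ze_add, add_neg_cancel, ze_zero]

lemma sumA {n v : ℕ} (hn : n ≠ 0) (h2v : 2 * v < n) :
    ∑ u ∈ range n, Ft n v u * (starRingEnd ℂ) (Ft n v u) = 2 * (n : ℂ) * v := by
  have expand : ∀ u : ℕ, Ft n v u * (starRingEnd ℂ) (Ft n v u)
      = ∑ t ∈ range v, ∑ s ∈ range v,
          (2 * ze n ((u:ℤ) * ((s:ℤ) - t)) - ze n ((u:ℤ) * ((s:ℤ) - t + v))
            - ze n ((u:ℤ) * ((s:ℤ) - t - v))) := by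
    intro u
    rw [conjFt, Ft]
    calc ((1 - ze n ((u:ℤ)*v)) * Rf n v u)
          * ((1 - ze n (-((u:ℤ)*v))) * ∑ s ∈ range v, ze n ((u:ℤ)*s))
        = ((1 - ze n ((u:ℤ)*v)) * (1 - ze n (-((u:ℤ)*v))))
          * ((∑ t ∈ range v, ze n (-((u:ℤ)*t))) * ∑ s ∈ range v, ze n ((u:ℤ)*s)) := by
          rw [Rf]; ring
      _ = ((1 - ze n ((u:ℤ)*v)) * (1 - ze n (-((u:ℤ)*v))))
          * ∑ t ∈ range v, ∑ s ∈ range v, ze n (-((u:ℤ)*t)) * ze n ((u:ℤ)*s) := by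
          rw [Finset.sum_mul_sum]
      _ = ∑ t ∈ range v, ∑ s ∈ range v, ((1 - ze n ((u:ℤ)*v)) * (1 - ze n (-((u:ℤ)*v))))
          * (ze n (-((u:ℤ)*t)) * ze n ((u:ℤ)*s)) := by
          rw [Finset.mul_sum]
          exact Finset.sum_congr rfl fun t _ => by rw [Finset.mul_sum]
      _ = _ := by
          refine Finset.sum_congr rfl fun t _ => Finset.sum_congr rfl fun s _ => ?_
          have e1 : ze n ((u:ℤ)*((s:ℤ)-t)) = ze n (-((u:ℤ)*t)) * ze n ((u:ℤ)*s) := by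
            rw [← ze_add]; congr 1; ring
          have e2 : ze n ((u:ℤ)*((s:ℤ)-t+v))
              = ze n (-((u:ℤ)*t)) * ze n ((u:ℤ)*s) * ze n ((u:ℤ)*v) := by
            rw [← ze_add, ← ze_add]; congr 1; ring
          have e3 : ze n ((u:ℤ)*((s:ℤ)-t-v))
              = ze n (-((u:ℤ)*t)) * ze n ((u:ℤ)*s) * ze n (-((u:ℤ)*v)) := by
            rw [← ze_add, ← ze_add]; congr 1; ring
          rw [e1, e2, e3]
          linear_combination (ze n (-((u:ℤ)*t)) * ze n ((u:ℤ)*s)) * hXX n ((u:ℤ)*v)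
  rw [Finset.sum_congr rfl fun u _ => expand u, Finset.sum_comm]
  have inner2 : ∀ t ∈ range v, (∑ u ∈ range n, ∑ s ∈ range v,
      (2 * ze n ((u:ℤ) * ((s:ℤ) - t)) - ze n ((u:ℤ) * ((s:ℤ) - t + v))
        - ze n ((u:ℤ) * ((s:ℤ) - t - v)))) = 2 * (n : ℂ) := by
    intro t ht
    simp only [Finset.mem_range] at ht
    rw [Finset.sum_comm]
    have inner3 : ∀ s ∈ range v, (∑ u ∈ range n,
        (2 * ze n ((u:ℤ) * ((s:ℤ) - t)) - ze n ((u:ℤ) * ((s:ℤ) - t + v))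
          - ze n ((u:ℤ) * ((s:ℤ) - t - v)))) = if s = t then 2 * (n:ℂ) else 0 := by
      intro s hs
      simp only [Finset.mem_range] at hs
      rw [Finset.sum_sub_distrib, Finset.sum_sub_distrib, ← Finset.mul_sum,
        orth hn, orth hn, orth hn]
      rw [if_neg (not_dvd_small ((s:ℤ) - t + v) (by omega) (by omega)),
        if_neg (show ¬ (n:ℤ) ∣ ((s:ℤ) - t - v) from fun h =>
          (not_dvd_small (n := n) ((v:ℤ) + t - s) (by omega) (by omega))
          (by rwa [show ((v:ℤ) + t - s) = -((s:ℤ) - t - v) from by ring, Int.dvd_neg]))]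
      have heq : (if (n:ℤ) ∣ ((s:ℤ) - t) then (n:ℂ) else 0) = (if s = t then (n:ℂ) else 0) :=
        if_congr (dvd_iff_eq s t (by omega) (by omega)) rfl rfl
      rw [heq]
      split_ifs <;> ring
    rw [Finset.sum_congr rfl inner3, Finset.sum_ite_eq' (range v) t, if_pos (by simpa using ht)]
  rw [Finset.sum_congr rfl inner2, Finset.sum_const, Finset.card_range, nsmul_eq_mul]
  ring

lemma sumB {n v : ℕ} (hn : n ≠ 0) (h2v : 2 * v < n) :
    ∑ u ∈ range n, Ft n v (u + 1) * (starRingEnd ℂ) (Ft n v u)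
      = (n : ℂ) * ((1 + ze n (v : ℤ)) * ∑ t ∈ range v, ze n (-(t : ℤ))) := by
  have expand : ∀ u : ℕ, Ft n v (u + 1) * (starRingEnd ℂ) (Ft n v u)
      = ∑ t ∈ range v, ∑ s ∈ range v,
          ((ze n (-(t:ℤ)) + ze n ((v:ℤ)) * ze n (-(t:ℤ))) * ze n ((u:ℤ) * ((s:ℤ) - t))
            - ze n ((v:ℤ)) * ze n (-(t:ℤ)) * ze n ((u:ℤ) * ((s:ℤ) - t + v))
            - ze n (-(t:ℤ)) * ze n ((u:ℤ) * ((s:ℤ) - t - v))) := by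
    intro u
    rw [conjFt, Ft]
    calc ((1 - ze n (((u:ℕ)+1 : ℕ) * (v:ℤ))) * Rf n v (u+1))
          * ((1 - ze n (-((u:ℤ)*v))) * ∑ s ∈ range v, ze n ((u:ℤ)*s))
        = ((1 - ze n (((u:ℕ)+1 : ℕ) * (v:ℤ))) * (1 - ze n (-((u:ℤ)*v))))
          * ((∑ t ∈ range v, ze n (-((((u:ℕ)+1 : ℕ)) * (t:ℤ)))) * ∑ s ∈ range v, ze n ((u:ℤ)*s)) := by
          rw [Rf]; ring
      _ = ((1 - ze n (((u:ℕ)+1 : ℕ) * (v:ℤ))) * (1 - ze n (-((u:ℤ)*v))))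
          * ∑ t ∈ range v, ∑ s ∈ range v, ze n (-((((u:ℕ)+1 : ℕ)) * (t:ℤ))) * ze n ((u:ℤ)*s) := by
          rw [Finset.sum_mul_sum]
      _ = ∑ t ∈ range v, ∑ s ∈ range v, ((1 - ze n (((u:ℕ)+1 : ℕ) * (v:ℤ))) * (1 - ze n (-((u:ℤ)*v))))
          * (ze n (-((((u:ℕ)+1 : ℕ)) * (t:ℤ))) * ze n ((u:ℤ)*s)) := by
          rw [Finset.mul_sum]
          exact Finset.sum_congr rfl fun t _ => by rw [Finset.mul_sum]
      _ = _ := by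
          refine Finset.sum_congr rfl fun t _ => Finset.sum_congr rfl fun s _ => ?_
          have e0 : ze n (((u:ℕ)+1 : ℕ) * (v:ℤ)) = ze n ((v:ℤ)) * ze n ((u:ℤ)*v) := by
            rw [← ze_add]; congr 1; push_cast; ring
          have e0' : ze n (-((((u:ℕ)+1 : ℕ)) * (t:ℤ))) = ze n (-(t:ℤ)) * ze n (-((u:ℤ)*t)) := by
            rw [← ze_add]; congr 1; push_cast; ring
          have e1 : ze n ((u:ℤ)*((s:ℤ)-t)) = ze n (-((u:ℤ)*t)) * ze n ((u:ℤ)*s) := by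
            rw [← ze_add]; congr 1; ring
          have e2 : ze n ((u:ℤ)*((s:ℤ)-t+v))
              = ze n (-((u:ℤ)*t)) * ze n ((u:ℤ)*s) * ze n ((u:ℤ)*v) := by
            rw [← ze_add, ← ze_add]; congr 1; ring
          have e3 : ze n ((u:ℤ)*((s:ℤ)-t-v))
              = ze n (-((u:ℤ)*t)) * ze n ((u:ℤ)*s) * ze n (-((u:ℤ)*v)) := by
            rw [← ze_add, ← ze_add]; congr 1; ring
          rw [e0, e0', e1, e2, e3]
          linear_combination (ze n ((v:ℤ)) * ze n (-(t:ℤ)) * ze n (-((u:ℤ)*t))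
            * ze n ((u:ℤ)*s)) * hXX n ((u:ℤ)*v)
  rw [Finset.sum_congr rfl fun u _ => expand u, Finset.sum_comm]
  have inner2 : ∀ t ∈ range v, (∑ u ∈ range n, ∑ s ∈ range v,
      ((ze n (-(t:ℤ)) + ze n ((v:ℤ)) * ze n (-(t:ℤ))) * ze n ((u:ℤ) * ((s:ℤ) - t))
        - ze n ((v:ℤ)) * ze n (-(t:ℤ)) * ze n ((u:ℤ) * ((s:ℤ) - t + v))
        - ze n (-(t:ℤ)) * ze n ((u:ℤ) * ((s:ℤ) - t - v))))
      = (n : ℂ) * ((1 + ze n (v:ℤ)) * ze n (-(t:ℤ))) := by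
    intro t ht
    simp only [Finset.mem_range] at ht
    rw [Finset.sum_comm]
    have inner3 : ∀ s ∈ range v, (∑ u ∈ range n,
        ((ze n (-(t:ℤ)) + ze n ((v:ℤ)) * ze n (-(t:ℤ))) * ze n ((u:ℤ) * ((s:ℤ) - t))
          - ze n ((v:ℤ)) * ze n (-(t:ℤ)) * ze n ((u:ℤ) * ((s:ℤ) - t + v))
          - ze n (-(t:ℤ)) * ze n ((u:ℤ) * ((s:ℤ) - t - v))))
        = if s = t then (n : ℂ) * ((1 + ze n (v:ℤ)) * ze n (-(t:ℤ))) else 0 := by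
      intro s hs
      simp only [Finset.mem_range] at hs
      rw [Finset.sum_sub_distrib, Finset.sum_sub_distrib, ← Finset.mul_sum, ← Finset.mul_sum,
        ← Finset.mul_sum, orth hn, orth hn, orth hn]
      rw [if_neg (not_dvd_small ((s:ℤ) - t + v) (by omega) (by omega)),
        if_neg (show ¬ (n:ℤ) ∣ ((s:ℤ) - t - v) from fun h =>
          (not_dvd_small (n := n) ((v:ℤ) + t - s) (by omega) (by omega))
          (by rwa [show ((v:ℤ) + t - s) = -((s:ℤ) - t - v) from by ring, Int.dvd_neg]))]
      have heq : (if (n:ℤ) ∣ ((s:ℤ) - t) then (n:ℂ) else 0) = (if s = t then (n:ℂ) else 0) :=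
        if_congr (dvd_iff_eq s t (by omega) (by omega)) rfl rfl
      rw [heq]
      split_ifs <;> ring
    rw [Finset.sum_congr rfl inner3, Finset.sum_ite_eq' (range v) t, if_pos (by simpa using ht)]
  rw [Finset.sum_congr rfl inner2, ← Finset.mul_sum, ← Finset.mul_sum]


lemma zecos (n : ℕ) (hn : n ≠ 0) (a : ℤ) :
    ze n a + ze n (-a) = ((2 * Real.cos (2 * Real.pi * (a : ℝ) / n) : ℝ) : ℂ) := by
  have hform : ∀ b : ℤ, ze n b = Complex.exp (((2 * Real.pi * (b : ℝ) / n : ℝ) : ℂ) * Complex.I) := by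
    intro b
    rw [ze, ← Complex.exp_int_mul]
    congr 1
    have hn' : (n : ℂ) ≠ 0 := Nat.cast_ne_zero.mpr hn
    push_cast
    field_simp
  rw [hform a, hform (-a), Complex.exp_mul_I, Complex.exp_mul_I]
  push_cast [Complex.ofReal_cos]
  have harg : (2 * (Real.pi:ℂ) * -(a:ℂ) / n) = -(2 * (Real.pi:ℂ) * (a:ℂ) / n) := by ring
  rw [harg, Complex.cos_neg, Complex.sin_neg]
  ring

-- real trig endgame
lemma realid (n v : ℕ) (hn : 2 ≤ n) (hv1 : 0 < v) (hv2 : (v:ℝ) < (n:ℝ)/2) :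
    (2 * (n:ℝ) * (∑ k ∈ Finset.Icc 1 v,
        (Real.sin (Real.pi * (k : ℝ) / n) / Real.sin (Real.pi * (v : ℝ) / n)) ^ 2) - n)
      * (2 - 2 * Real.cos (2 * Real.pi * (v:ℝ) / n))
    = 4 * n * v - n * ∑ t ∈ range v,
        (2 * Real.cos (2 * Real.pi * (t:ℝ) / n) + 2 * Real.cos (2 * Real.pi * ((v:ℝ) - (t:ℝ)) / n)) := by
  have hnpos : (0:ℝ) < n := by positivity
  have hsv : 0 < Real.sin (Real.pi * (v:ℝ) / n) := by
    apply Real.sin_pos_of_pos_of_lt_pi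
    · positivity
    · rw [div_lt_iff₀ hnpos] at *
      nlinarith [Real.pi_pos]
  have sinsq : ∀ x : ℝ, Real.sin x ^ 2 = (1 - Real.cos (2 * x)) / 2 := by
    intro x
    have h1 := Real.sin_sq_add_cos_sq x
    have h2 := Real.cos_two_mul x
    nlinarith
  have hDcos : 2 - 2 * Real.cos (2 * Real.pi * (v:ℝ) / n)
      = 4 * Real.sin (Real.pi * (v:ℝ) / n) ^ 2 := by
    rw [sinsq]
    rw [show 2 * (Real.pi * (v:ℝ) / n) = 2 * Real.pi * (v:ℝ) / n from by ring]
    ring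
  have hcancel : ∀ k : ℕ,
      (Real.sin (Real.pi * (k : ℝ) / n) / Real.sin (Real.pi * (v : ℝ) / n)) ^ 2
        * (4 * Real.sin (Real.pi * (v:ℝ) / n) ^ 2)
      = 4 * Real.sin (Real.pi * (k : ℝ) / n) ^ 2 := by
    intro k
    rw [div_pow]
    field_simp
  -- LHS = 8n Σ sin² - 4n sin v²
  have hL : (2 * (n:ℝ) * (∑ k ∈ Finset.Icc 1 v,
        (Real.sin (Real.pi * (k : ℝ) / n) / Real.sin (Real.pi * (v : ℝ) / n)) ^ 2) - n)
      * (2 - 2 * Real.cos (2 * Real.pi * (v:ℝ) / n))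
      = 2 * n * (∑ k ∈ Finset.Icc 1 v, 4 * Real.sin (Real.pi * (k : ℝ) / n) ^ 2)
        - n * (4 * Real.sin (Real.pi * (v:ℝ) / n) ^ 2) := by
    rw [hDcos, ← Finset.sum_congr rfl fun k _ => hcancel k, ← Finset.sum_mul]
    ring
  rw [hL]
  have hconv : ∀ k : ℕ, 4 * Real.sin (Real.pi * (k : ℝ) / n) ^ 2
      = 2 - 2 * Real.cos (2 * Real.pi * (k:ℝ) / n) := by
    intro k
    rw [sinsq, show 2 * (Real.pi * (k:ℝ) / n) = 2 * Real.pi * (k:ℝ) / n from by ring]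
    ring
  have hsum1 : ∑ k ∈ Finset.Icc 1 v, 4 * Real.sin (Real.pi * (k:ℝ)/n)^2
      = 2*(v:ℝ) - 2*∑ k ∈ Finset.Icc 1 v, Real.cos (2*Real.pi*(k:ℝ)/n) := by
    rw [Finset.sum_congr rfl fun k _ => hconv k, Finset.sum_sub_distrib, ← Finset.mul_sum,
      Finset.sum_const, Nat.card_Icc, nsmul_eq_mul]
    push_cast [show v + 1 - 1 = v from by omega]
    ring
  have hicc : ∀ g : ℕ → ℝ, ∑ k ∈ Finset.Icc 1 v, g k = ∑ i ∈ range v, g (1 + i) := by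
    intro g
    rw [← Finset.Ico_add_one_right_eq_Icc, Finset.sum_Ico_eq_sum_range]
    simp [Nat.succ_sub_one]
  have hrefl : ∑ t ∈ range v, Real.cos (2 * Real.pi * ((v:ℝ) - (t:ℝ)) / n)
      = ∑ k ∈ Finset.Icc 1 v, Real.cos (2 * Real.pi * (k:ℝ) / n) := by
    rw [hicc (fun k => Real.cos (2 * Real.pi * (k:ℝ) / n))]
    have hr := Finset.sum_range_reflect (fun i => Real.cos (2 * Real.pi * ((1 + i : ℕ):ℝ) / n)) v
    rw [← hr]
    refine Finset.sum_congr rfl fun t ht => ?_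
    simp only [Finset.mem_range] at ht
    have h' : (((1 + (v - 1 - t)) : ℕ) : ℝ) = (v:ℝ) - t := by
      have e : 1 + (v - 1 - t) = v - t := by omega
      rw [e, Nat.cast_sub (by omega)]
    rw [h']
  have hrange : ∑ t ∈ range v, Real.cos (2 * Real.pi * (t:ℝ) / n)
      = 1 + (∑ k ∈ Finset.Icc 1 v, Real.cos (2 * Real.pi * (k:ℝ) / n))
        - Real.cos (2 * Real.pi * (v:ℝ) / n) := by
    have h1 : ∑ t ∈ range (v + 1), Real.cos (2 * Real.pi * (t:ℝ) / n)
        = ∑ t ∈ range v, Real.cos (2 * Real.pi * (t:ℝ) / n)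
          + Real.cos (2 * Real.pi * (v:ℝ) / n) := Finset.sum_range_succ _ v
    have h2 : ∑ t ∈ range (v + 1), Real.cos (2 * Real.pi * (t:ℝ) / n)
        = (∑ t ∈ range v, Real.cos (2 * Real.pi * ((t + 1 : ℕ):ℝ) / n))
          + Real.cos (2 * Real.pi * ((0:ℕ):ℝ) / n) := Finset.sum_range_succ' _ v
    have h3 : ∑ t ∈ range v, Real.cos (2 * Real.pi * ((t + 1 : ℕ):ℝ) / n)
        = ∑ k ∈ Finset.Icc 1 v, Real.cos (2 * Real.pi * (k:ℝ) / n) := by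
      rw [hicc (fun k => Real.cos (2 * Real.pi * (k:ℝ) / n))]
      refine Finset.sum_congr rfl fun t _ => ?_
      have : (t + 1 : ℕ) = (1 + t : ℕ) := by omega
      rw [this]
    rw [h3] at h2
    simp only [Nat.cast_zero, mul_zero, zero_div, Real.cos_zero] at h2
    linarith [h1, h2]
  have hRHS : ∑ t ∈ range v,
      (2 * Real.cos (2 * Real.pi * (t:ℝ) / n) + 2 * Real.cos (2 * Real.pi * ((v:ℝ) - (t:ℝ)) / n))
      = 2 * (∑ t ∈ range v, Real.cos (2 * Real.pi * (t:ℝ) / n))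
        + 2 * (∑ t ∈ range v, Real.cos (2 * Real.pi * ((v:ℝ) - (t:ℝ)) / n)) := by
    rw [Finset.sum_add_distrib, Finset.mul_sum, Finset.mul_sum]
  rw [hsum1, ← hDcos, hRHS, hrefl, hrange]
  ring


end HC

open HC

/-- For `0 < v < n/2`,
`∑_{u=0}^{n-1} |c_{nu+v}|² = 2n ∑_{k=1}^{v} (sin(πk/n)/sin(πv/n))² - n`. -/
theorem hCorr_sum_sq (n : ℕ) (hn : 2 ≤ n) (v : ℕ) (hv1 : 0 < v) (hv2 : (v : ℝ) < (n : ℝ) / 2) :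
    ∑ u ∈ Finset.range n, ‖hCorr n (n * u + v)‖ ^ 2 =
      2 * n * (∑ k ∈ Finset.Icc 1 v,
          (Real.sin (Real.pi * (k : ℝ) / n) / Real.sin (Real.pi * (v : ℝ) / n)) ^ 2) - n := by
  have hn0 : n ≠ 0 := by omega
  have h2v : 2 * v < n := by
    have h : (2 * v : ℝ) < n := by push_cast; linarith
    exact_mod_cast h
  have hvn : v < n := by omega
  have hnpos : (0:ℝ) < n := by positivity
  -- nonvanishing of d = 1 - ζ^{-v}
  have hdne : (1 : ℂ) - ze n (-(v:ℤ)) ≠ 0 := by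
    intro h
    have h1 : ze n (-(v:ℤ)) = 1 := by linear_combination -h
    have hdvd := (ze_eq_one_iff hn0 _).mp h1
    rw [Int.dvd_neg] at hdvd
    have := Int.le_of_dvd (by exact_mod_cast hv1) hdvd
    omega
  have hdc : (starRingEnd ℂ) ((1 : ℂ) - ze n (-(v:ℤ))) = 1 - ze n (v:ℤ) := by
    rw [map_sub, map_one, ze_conj, neg_neg]
  set d : ℂ := 1 - ze n (-(v:ℤ)) with hd
  set A : ℝ := ∑ u ∈ range n, ‖hCorr n (n*u+v)‖^2 with hA
  set W : ℂ := ∑ t ∈ range v, ze n (-(t:ℤ)) with hW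
  -- Step 1: multiply by d * conj d and telescope
  have step1 : (A : ℂ) * (d * (starRingEnd ℂ) d)
      = ∑ u ∈ range n, (Ft n v (u+1) - Ft n v u)
          * (starRingEnd ℂ) (Ft n v (u+1) - Ft n v u) := by
    rw [hA]
    push_cast
    rw [Finset.sum_mul]
    refine Finset.sum_congr rfl fun u hu => ?_
    have h1 : ((‖hCorr n (n*u+v)‖ : ℝ)^2 : ℂ)
        = hCorr n (n*u+v) * (starRingEnd ℂ) (hCorr n (n*u+v)) := by
      rw [Complex.mul_conj, ← Complex.sq_norm]
      norm_cast
    have hk := key1 hn0 hv1 hvn u (Finset.mem_range.mp hu)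
    rw [← hd] at hk
    calc (‖hCorr n (n*u+v)‖ : ℂ)^2 * (d * (starRingEnd ℂ) d)
        = (hCorr n (n*u+v) * (starRingEnd ℂ) (hCorr n (n*u+v))) * (d * (starRingEnd ℂ) d) := by
          rw [← h1]
      _ = (d * hCorr n (n*u+v)) * (starRingEnd ℂ) (d * hCorr n (n*u+v)) := by
          rw [map_mul]; ring
      _ = (Ft n v (u+1) - Ft n v u) * (starRingEnd ℂ) (Ft n v (u+1) - Ft n v u) := by rw [hk]
  -- Step 2: expand the square
  have expand : ∀ u : ℕ, (Ft n v (u+1) - Ft n v u) * (starRingEnd ℂ) (Ft n v (u+1) - Ft n v u)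
      = Ft n v (u+1) * (starRingEnd ℂ) (Ft n v (u+1)) + Ft n v u * (starRingEnd ℂ) (Ft n v u)
        - Ft n v (u+1) * (starRingEnd ℂ) (Ft n v u)
        - Ft n v u * (starRingEnd ℂ) (Ft n v (u+1)) := by
    intro u; rw [map_sub]; ring
  -- shift sum
  have hg0 : Ft n v 0 * (starRingEnd ℂ) (Ft n v 0) = 0 := by
    have : Ft n v 0 = 0 := by simp [Ft, ze_zero]
    rw [this]; simp
  have hgn : Ft n v n * (starRingEnd ℂ) (Ft n v n) = 0 := by
    have : Ft n v n = 0 := by rw [Ft, ze_n_mul hn0]; simp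
    rw [this]; simp
  have shift : ∑ u ∈ range n, Ft n v (u+1) * (starRingEnd ℂ) (Ft n v (u+1))
      = ∑ u ∈ range n, Ft n v u * (starRingEnd ℂ) (Ft n v u) := by
    have h1 := Finset.sum_range_succ' (fun w => Ft n v w * (starRingEnd ℂ) (Ft n v w)) n
    have h2 := Finset.sum_range_succ (fun w => Ft n v w * (starRingEnd ℂ) (Ft n v w)) n
    rw [h2] at h1
    rw [hg0, hgn, add_zero, add_zero] at h1
    exact h1.symm
  have hconjsum : ∑ u ∈ range n, Ft n v u * (starRingEnd ℂ) (Ft n v (u+1))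
      = (starRingEnd ℂ) (∑ u ∈ range n, Ft n v (u+1) * (starRingEnd ℂ) (Ft n v u)) := by
    rw [map_sum]
    refine Finset.sum_congr rfl fun u _ => ?_
    rw [map_mul, Complex.conj_conj]
    ring
  have step3 : (A : ℂ) * (d * (starRingEnd ℂ) d)
      = 4 * (n:ℂ) * v - (n:ℂ) * ((1 + ze n (v:ℤ)) * W)
        - (starRingEnd ℂ) ((n:ℂ) * ((1 + ze n (v:ℤ)) * W)) := by
    rw [step1, Finset.sum_congr rfl fun u _ => expand u, Finset.sum_sub_distrib,
      Finset.sum_sub_distrib, Finset.sum_add_distrib, shift, hconjsum,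
      sumA hn0 h2v, sumB hn0 h2v, ← hW]
    ring
  -- realify
  have hconjW : (starRingEnd ℂ) W = ∑ t ∈ range v, ze n (t:ℤ) := by
    rw [hW, map_sum]
    refine Finset.sum_congr rfl fun t _ => ?_
    rw [ze_conj, neg_neg]
  have hcomb : (n:ℂ) * ((1 + ze n (v:ℤ)) * W)
        + (starRingEnd ℂ) ((n:ℂ) * ((1 + ze n (v:ℤ)) * W))
      = (((n : ℝ) * ∑ t ∈ range v, (2 * Real.cos (2 * Real.pi * (t:ℝ) / n)
          + 2 * Real.cos (2 * Real.pi * ((v:ℝ) - (t:ℝ)) / n)) : ℝ) : ℂ) := by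
    rw [map_mul, map_mul, map_add, map_one, ze_conj, hconjW, map_natCast]
    rw [show ((n:ℂ) * ((1 + ze n (v:ℤ)) * W) + (n:ℂ) * ((1 + ze n (-(v:ℤ))) * ∑ t ∈ range v, ze n (t:ℤ)))
        = (n:ℂ) * ((1 + ze n (v:ℤ)) * W + (1 + ze n (-(v:ℤ))) * ∑ t ∈ range v, ze n (t:ℤ)) from by ring]
    have hinner : (1 + ze n (v:ℤ)) * W + (1 + ze n (-(v:ℤ))) * ∑ t ∈ range v, ze n (t:ℤ)
        = ∑ t ∈ range v, (((2 * Real.cos (2 * Real.pi * (t:ℝ) / n)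
            + 2 * Real.cos (2 * Real.pi * ((v:ℝ) - (t:ℝ)) / n) : ℝ)) : ℂ) := by
      rw [hW, Finset.mul_sum, Finset.mul_sum, ← Finset.sum_add_distrib]
      refine Finset.sum_congr rfl fun t _ => ?_
      have e1 : ze n (v:ℤ) * ze n (-(t:ℤ)) = ze n ((v:ℤ) - t) := by
        rw [sub_eq_add_neg, ze_add]
      have e2 : ze n (-(v:ℤ)) * ze n (t:ℤ) = ze n (-((v:ℤ) - t)) := by
        rw [show -((v:ℤ) - t) = -(v:ℤ) + t from by ring, ze_add]
      have z1 := zecos n hn0 (t:ℤ)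
      have z2 := zecos n hn0 ((v:ℤ) - t)
      push_cast at z1 z2 ⊢
      linear_combination z1 + z2 + e1 + e2
    rw [hinner]
    push_cast
    ring
  have hDr : d * (starRingEnd ℂ) d = (((2 - 2 * Real.cos (2 * Real.pi * (v:ℝ) / n)) : ℝ) : ℂ) := by
    rw [hdc, hd]
    have z := zecos n hn0 (v:ℤ)
    have hx := hXX n (v:ℤ)
    push_cast at z ⊢
    linear_combination -z + hx
  -- real-side equation for A
  have hreal : A * (2 - 2 * Real.cos (2 * Real.pi * (v:ℝ) / n))
      = 4 * (n:ℝ) * v - (n:ℝ) * ∑ t ∈ range v, (2 * Real.cos (2 * Real.pi * (t:ℝ) / n)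
          + 2 * Real.cos (2 * Real.pi * ((v:ℝ) - (t:ℝ)) / n)) := by
    have hc : ((A * (2 - 2 * Real.cos (2 * Real.pi * (v:ℝ) / n)) : ℝ) : ℂ)
        = ((4 * (n:ℝ) * v - (n:ℝ) * ∑ t ∈ range v, (2 * Real.cos (2 * Real.pi * (t:ℝ) / n)
            + 2 * Real.cos (2 * Real.pi * ((v:ℝ) - (t:ℝ)) / n)) : ℝ) : ℂ) := by
      rw [Complex.ofReal_mul, ← hDr, step3]
      push_cast at hcomb ⊢
      linear_combination -hcomb
    exact_mod_cast hc
  -- trig endgame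
  have hrid := realid n v hn hv1 hv2
  have hsv : 0 < Real.sin (Real.pi * (v:ℝ) / n) := by
    apply Real.sin_pos_of_pos_of_lt_pi
    · positivity
    · rw [div_lt_iff₀ hnpos] at *
      nlinarith [Real.pi_pos]
  have hDpos : 0 < 2 - 2 * Real.cos (2 * Real.pi * (v:ℝ) / n) := by
    have h1 := Real.sin_sq_add_cos_sq (Real.pi * (v:ℝ) / n)
    have h2 := Real.cos_two_mul (Real.pi * (v:ℝ) / n)
    have h3 : 2 * Real.pi * (v:ℝ) / n = 2 * (Real.pi * (v:ℝ) / n) := by ring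
    rw [h3, h2]
    nlinarith [pow_pos hsv 2, h1]
  apply mul_right_cancel₀ (ne_of_gt hDpos)
  rw [hreal, hrid]
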